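/- arXiv:1112.0358 — 3 statements merged into one kernel-verified Lean document; each statement's English description precedes it below -/
import Mathlib

section
/- Let α and β be natural numbers. Then there exist integers c_l for α ≤ l ≤ α+β and integers d_m for β ≤ m ≤ α+β, depending at most on α and β, with d_β ≠ 0, such that one has the polynomial identity c_α + Σ_{l=1}^{β} c_{α+l}(x+1)^{α+l} = Σ_{m=β}^{α+β} d_m x^m in ℤ[x]. -/
open Polynomial Finset

noncomputable def hpoly (α n : ℕ) : Polynomial ℤ := (X + 1) ^ α * X ^ n

noncomputable def fpoly (α n : ℕ) : Polynomial ℤ :=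
  ∑ k ∈ Finset.range (α + n + 1),
    C (((α + n + 1).factorial : ℤ) / (k + 1) * (hpoly α n).coeff k) * X ^ (k + 1)

lemma natDegree_hpoly (α n : ℕ) : (hpoly α n).natDegree ≤ α + n := by
  unfold hpoly
  apply le_trans (natDegree_mul_le)
  have h1 : ((((X:Polynomial ℤ) + 1) ^ α)).natDegree ≤ α := by
    apply le_trans (natDegree_pow_le)
    have : ((X:Polynomial ℤ) + 1).natDegree ≤ 1 := by
      simpa using (natDegree_X_add_C (1:ℤ)).le
    nlinarith
  simpa [natDegree_X_pow] using Nat.add_le_add h1 (le_refl n)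

lemma coeff_single (a : ℤ) (b m : ℕ) :
    ((C a * X ^ b : Polynomial ℤ)).coeff m = if m = b then a else 0 := by
  simp [coeff_C_mul, coeff_X_pow]

lemma coeff_fpoly_succ (α n : ℕ) (k : ℕ) :
    (fpoly α n).coeff (k + 1) =
      ((α + n + 1).factorial : ℤ) / (k + 1) * (hpoly α n).coeff k := by
  unfold fpoly
  rw [finset_sum_coeff]
  simp only [coeff_single]
  by_cases hk : k < α + n + 1
  · rw [Finset.sum_eq_single k]
    · simp
    · intro b _ hb
      rw [if_neg (by omega)]
    · intro h; exact absurd (Finset.mem_range.2 hk) h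
  · have h0 : (hpoly α n).coeff k = 0 := by
      apply coeff_eq_zero_of_natDegree_lt
      have := natDegree_hpoly α n
      have h1 : α + n < k := by omega
      exact lt_of_le_of_lt (natDegree_hpoly α n) (by exact_mod_cast Nat.cast_lt.mpr h1)
    rw [h0, mul_zero]
    apply Finset.sum_eq_zero
    intro b hb
    simp only [Finset.mem_range] at hb
    rw [if_neg (by omega)]

lemma coeff_fpoly_zero (α n : ℕ) : (fpoly α n).coeff 0 = 0 := by
  unfold fpoly
  rw [finset_sum_coeff]
  apply Finset.sum_eq_zero
  intro b _
  simp [coeff_C_mul, coeff_X_pow]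

lemma natDegree_fpoly (α n : ℕ) : (fpoly α n).natDegree ≤ α + n + 1 := by
  unfold fpoly
  apply le_trans (natDegree_sum_le _ _)
  rw [Finset.fold_max_le]
  constructor
  · omega
  · intro k hk
    simp only [Finset.mem_range] at hk
    apply le_trans (natDegree_C_mul_le _ _)
    simp [natDegree_X_pow]
    omega

lemma derivative_fpoly (α n : ℕ) :
    derivative (fpoly α n) = C ((α + n + 1).factorial : ℤ) * hpoly α n := by
  unfold fpoly
  rw [derivative_sum]
  have hrhs : C ((α + n + 1).factorial : ℤ) * hpoly α n
      = ∑ k ∈ Finset.range (α + n + 1),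
          C (((α + n + 1).factorial : ℤ) * (hpoly α n).coeff k) * X ^ k := by
    conv_lhs => rw [(hpoly α n).as_sum_range' (α + n + 1)
      (lt_of_le_of_lt (natDegree_hpoly α n) (by omega))]
    rw [Finset.mul_sum]
    exact Finset.sum_congr rfl fun k _ => by
      rw [← C_mul_X_pow_eq_monomial, ← mul_assoc, ← C_mul]
  rw [hrhs]
  apply Finset.sum_congr rfl
  intro k hk
  simp only [Finset.mem_range] at hk
  rw [derivative_C_mul, derivative_X_pow]
  have hdvd : ((k:ℤ) + 1) ∣ ((α + n + 1).factorial : ℤ) := by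
    have : (k + 1) ∣ (α + n + 1).factorial :=
      Nat.dvd_factorial (Nat.succ_pos k) (by omega)
    exact_mod_cast Int.natCast_dvd_natCast.mpr this
  have hc : ((α + n + 1).factorial : ℤ) / ((k:ℤ) + 1) * ((k:ℤ) + 1)
      = ((α + n + 1).factorial : ℤ) := Int.ediv_mul_cancel hdvd
  push_cast
  rw [← mul_assoc, ← C_mul]
  congr 1
  have h2 : ((α + n + 1).factorial : ℤ) / ((k:ℤ) + 1) * (hpoly α n).coeff k * ((k:ℤ) + 1)
      = ((α + n + 1).factorial : ℤ) / ((k:ℤ) + 1) * ((k:ℤ) + 1) * (hpoly α n).coeff k := by ring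
  rw [h2, hc]

lemma coeff_hpoly_lt (α n k : ℕ) (hk : k < n) : (hpoly α n).coeff k = 0 := by
  have hdvd : (X : Polynomial ℤ) ^ n ∣ hpoly α n := ⟨(X + 1) ^ α, (mul_comm _ _)⟩
  exact X_pow_dvd_iff.mp hdvd k hk

lemma coeff_hpoly_self (α n : ℕ) : (hpoly α n).coeff n = 1 := by
  unfold hpoly
  have := coeff_mul_X_pow ((X + 1 : Polynomial ℤ) ^ α) n 0
  rw [zero_add] at this
  rw [this, coeff_zero_eq_eval_zero]
  simp

lemma coeff_hpoly_gt (α n k : ℕ) (hk : α + n < k) : (hpoly α n).coeff k = 0 :=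
  coeff_eq_zero_of_natDegree_lt (lt_of_le_of_lt (natDegree_hpoly α n) hk)

lemma derivative_g (α n : ℕ) :
    derivative ((fpoly α n).comp (X - C 1)) =
      X ^ α * (C ((α + n + 1).factorial : ℤ) * (X - C 1) ^ n) := by
  rw [derivative_comp, derivative_fpoly]
  have h1 : derivative ((X : Polynomial ℤ) - C 1) = 1 := by simp
  rw [h1, one_mul]
  unfold hpoly
  simp only [mul_comp, pow_comp, add_comp, X_comp, one_comp, C_comp]
  have h2 : (X : Polynomial ℤ) - C 1 + 1 = X := by
    rw [map_one]; ring
  rw [h2]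
  ring

lemma coeff_g_mid (α n k : ℕ) (h1 : 1 ≤ k) (h2 : k ≤ α) :
    ((fpoly α n).comp (X - C 1)).coeff k = 0 := by
  have hd : (derivative ((fpoly α n).comp (X - C 1))).coeff (k - 1) = 0 := by
    rw [derivative_g]
    have hdvd : (X : Polynomial ℤ) ^ α ∣
        X ^ α * (C ((α + n + 1).factorial : ℤ) * (X - C 1) ^ n) := ⟨_, rfl⟩
    exact X_pow_dvd_iff.mp hdvd (k - 1) (by omega)
  rw [coeff_derivative] at hd
  have hk : k - 1 + 1 = k := by omega
  rw [hk] at hd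
  have hne : ((k - 1 : ℕ) : ℤ) + 1 ≠ 0 := by positivity
  exact (mul_eq_zero.mp hd).resolve_right hne

lemma coeff_g_gt (α n k : ℕ) (hk : α + n + 1 < k) :
    ((fpoly α n).comp (X - C 1)).coeff k = 0 := by
  apply coeff_eq_zero_of_natDegree_lt
  calc ((fpoly α n).comp (X - C 1)).natDegree
      ≤ (fpoly α n).natDegree * ((X : Polynomial ℤ) - C 1).natDegree := natDegree_comp_le
    _ ≤ (α + n + 1) * 1 := by
        apply Nat.mul_le_mul (natDegree_fpoly α n)
        exact (natDegree_X_sub_C (1:ℤ)).le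
    _ < k := by omega

theorem statement8 (α β : ℕ) :
    ∃ (c : ℕ → ℤ) (d : ℕ → ℤ), d β ≠ 0 ∧
      (C (c α) + ∑ l ∈ Finset.Icc 1 β, C (c (α + l)) * (X + 1) ^ (α + l)
        : Polynomial ℤ) =
      ∑ m ∈ Finset.Icc β (α + β), C (d m) * X ^ m := by
  cases β with
  | zero =>
      refine ⟨fun _ => 1, fun m => if m = 0 then 1 else 0, by simp, ?_⟩
      rw [show Finset.Icc 1 0 = (∅ : Finset ℕ) by simp, Finset.sum_empty, add_zero]
      rw [Finset.sum_eq_single 0]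
      · simp
      · intro b _ hb; simp [hb]
      · intro h; simp at h
  | succ n =>
      set N : ℤ := ((α + n + 1).factorial : ℤ) with hN
      set f : Polynomial ℤ := fpoly α n with hf
      set g : Polynomial ℤ := f.comp (X - C 1) with hg
      refine ⟨fun m => if m = α then g.coeff 0 else g.coeff m, fun m => f.coeff m, ?_, ?_⟩
      · -- d (n+1) = f.coeff (n+1) ≠ 0
        show f.coeff (n + 1) ≠ 0
        have hc : f.coeff (n + 1) = N / ((n : ℤ) + 1) := by
          rw [hf, coeff_fpoly_succ, coeff_hpoly_self, mul_one]
        rw [hc]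
        intro h0
        have hdvd : ((n : ℤ) + 1) ∣ N := by
          have h3 : (n + 1) ∣ (α + n + 1).factorial :=
            Nat.dvd_factorial (Nat.succ_pos n) (by omega)
          rw [hN]
          exact_mod_cast Int.natCast_dvd_natCast.mpr h3
        have := Int.ediv_mul_cancel hdvd
        rw [h0, zero_mul] at this
        have hpos : 0 < (α + n + 1).factorial := Nat.factorial_pos _
        rw [hN] at this
        exact_mod_cast absurd this.symm (by positivity)
      · -- the identity
        have hRHS : ∑ m ∈ Finset.Icc (n + 1) (α + (n + 1)), C (f.coeff m) * X ^ m = f := by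
          ext m
          rw [finset_sum_coeff]
          simp only [coeff_single]
          rw [Finset.sum_ite_eq (Finset.Icc (n + 1) (α + (n + 1))) m f.coeff]
          by_cases hm : m ∈ Finset.Icc (n + 1) (α + (n + 1))
          · rw [if_pos hm]
          · rw [if_neg hm]
            simp only [Finset.mem_Icc, not_and_or, not_le] at hm
            rcases hm with hm | hm
            · -- m < n + 1
              rcases Nat.eq_zero_or_pos m with h0 | h0
              · rw [h0, hf, coeff_fpoly_zero]
              · obtain ⟨k, rfl⟩ : ∃ k, m = k + 1 := ⟨m - 1, by omega⟩
                rw [hf, coeff_fpoly_succ, coeff_hpoly_lt α n k (by omega), mul_zero]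
            · obtain ⟨k, rfl⟩ : ∃ k, m = k + 1 := ⟨m - 1, by omega⟩
              rw [hf, coeff_fpoly_succ, coeff_hpoly_gt α n k (by omega), mul_zero]
        have hgdecomp : g = C (g.coeff 0) +
            ∑ j ∈ Finset.Icc (α + 1) (α + n + 1), C (g.coeff j) * X ^ j := by
          ext m
          rw [coeff_add, finset_sum_coeff]
          simp only [coeff_single]
          rw [Finset.sum_ite_eq (Finset.Icc (α + 1) (α + n + 1)) m g.coeff]
          rcases Nat.eq_zero_or_pos m with h0 | h0
          · subst h0
            rw [if_neg (by simp), coeff_C, if_pos rfl, add_zero]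
          · rw [coeff_C, if_neg (by omega), zero_add]
            by_cases hm : m ∈ Finset.Icc (α + 1) (α + n + 1)
            · rw [if_pos hm]
            · rw [if_neg hm]
              simp only [Finset.mem_Icc, not_and_or, not_le] at hm
              rcases hm with hm | hm
              · rw [hg, hf]; exact coeff_g_mid α n m h0 (by omega)
              · rw [hg, hf]; exact coeff_g_gt α n m (by omega)
        have hcomp : g.comp (X + C 1) = f := by
          rw [hg, comp_assoc]
          have : ((X : Polynomial ℤ) - C 1).comp (X + C 1) = X := by
            rw [sub_comp, X_comp, C_comp]
            ring
          rw [this, comp_X]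
        -- reindex the l-sum to a j-sum
        have hre : ∑ l ∈ Finset.Icc 1 (n + 1),
              C ((fun m => if m = α then g.coeff 0 else g.coeff m) (α + l)) * (X + 1) ^ (α + l)
            = ∑ j ∈ Finset.Icc (α + 1) (α + n + 1), C (g.coeff j) * (X + 1) ^ j := by
          refine Finset.sum_nbij' (fun l => α + l) (fun j => j - α) ?_ ?_ ?_ ?_ ?_
          · intro l hl; simp only [Finset.mem_Icc] at *; omega
          · intro j hj; simp only [Finset.mem_Icc] at *; omega
          · intro l hl; simp only [Finset.mem_Icc] at hl; show α + l - α = l; omega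
          · intro j hj; simp only [Finset.mem_Icc] at hj; show α + (j - α) = j; omega
          · intro l hl
            simp only [Finset.mem_Icc] at hl
            dsimp only
            rw [if_neg (by omega)]
        rw [hre]
        rw [show (fun m => if m = α then g.coeff 0 else g.coeff m) α = g.coeff 0 from if_pos rfl]
        rw [show α + (n + 1) = α + n + 1 from by omega] at *
        rw [hRHS]
        -- now: C (g.coeff 0) + Σ_j C (g.coeff j) * (X+1)^j = f
        rw [← hcomp]
        conv_rhs => rw [hgdecomp]
        rw [add_comp, C_comp]
        congr 1
        rw [← Polynomial.coe_compRingHom_apply, map_sum]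
        apply Finset.sum_congr rfl
        intro j _
        rw [Polynomial.coe_compRingHom_apply, mul_comp, C_comp, pow_comp, X_comp]
        norm_num
end

section
/- Let k ≥ 3 and let r be an integer with 1 ≤ r ≤ k−1. There exists p₀ depending only on k such that for every prime p ≥ p₀ and every integer b ≥ 1, one has B_{0,b}^{r,k}(p) ≤ k!·p^{r(r−1)b/2}. -/
open scoped BigOperators

/-- `Ξ_c^r(ξ)`: the set of `r`-tuples `(ξ₁,…,ξ_r)` of integers with
`1 ≤ ξᵢ ≤ p^{c+1}`, `ξᵢ ≡ ξ (mod p^c)` for each `i`, and `ξᵢ ≡ ξⱼ (mod p^{c+1})`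
for no `i ≠ j`. -/
def XiSet (p c r : ℕ) (ξ : ℤ) : Set (Fin r → ℤ) :=
  {ξ' | (∀ i, 1 ≤ ξ' i ∧ ξ' i ≤ (p : ℤ) ^ (c + 1) ∧ ((p : ℤ) ^ c) ∣ (ξ' i - ξ)) ∧
    ∀ i j : Fin r, i ≠ j → ¬ ((p : ℤ) ^ (c + 1) ∣ (ξ' i - ξ' j))}

/-- The solution set `B_{a,b}^{σ,r}(m;ξ,η)` (for `a ≥ 1`): `r`-tuples `z` with
`1 ≤ zᵢ ≤ p^{kb}`, satisfying `∑ᵢ σᵢ(zᵢ-η)^j ≡ m_j (mod p^{jb})` for `1 ≤ j ≤ k`,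
and `z ≡ ξ' (mod p^{a+1})` for some `ξ' ∈ Ξ_a^r(ξ)`. -/
def Bset (p k r a b : ℕ) (σ : Fin r → ℤ) (m : ℕ → ℤ) (ξ η : ℤ) : Set (Fin r → ℤ) :=
  {z | (∀ i, 1 ≤ z i ∧ z i ≤ (p : ℤ) ^ (k * b)) ∧
    (∀ j ∈ Finset.Icc 1 k, ((p : ℤ) ^ (j * b)) ∣ ((∑ i, σ i * (z i - η) ^ j) - m j)) ∧
    ∃ ξ' ∈ XiSet p a r ξ, ∀ i, ((p : ℤ) ^ (a + 1)) ∣ (z i - ξ' i)}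

/-- The variant `B_{0,b}^{σ,r}(m;0,η)`: additionally `zᵢ ≢ η (mod p)` for each `i`,
and the congruence class condition is modulo `p` with `ξ' ∈ Ξ_0^r(0)`. -/
def Bset0 (p k r b : ℕ) (σ : Fin r → ℤ) (m : ℕ → ℤ) (η : ℤ) : Set (Fin r → ℤ) :=
  {z | (∀ i, 1 ≤ z i ∧ z i ≤ (p : ℤ) ^ (k * b)) ∧
    (∀ j ∈ Finset.Icc 1 k, ((p : ℤ) ^ (j * b)) ∣ ((∑ i, σ i * (z i - η) ^ j) - m j)) ∧
    (∀ i, ¬ ((p : ℤ) ∣ (z i - η))) ∧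
    ∃ ξ' ∈ XiSet p 0 r 0, ∀ i, ((p : ℤ)) ∣ (z i - ξ' i)}

/-- The number of equivalence classes of a set of `r`-tuples of integers under
coordinatewise congruence modulo `n`. -/
noncomputable def numClasses (n r : ℕ) (S : Set (Fin r → ℤ)) : ℕ :=
  Set.ncard ((fun z : Fin r → ℤ => fun i => ((z i : ZMod n))) '' S)

namespace Stmt10

open Polynomial



/-- Integer Taylor: `δ² ∣ (x+δ)^{j+1} - x^{j+1} - (j+1)x^j δ`. -/
lemma taylor_int (x δ : ℤ) : ∀ j : ℕ, δ ^ 2 ∣ (x + δ) ^ (j + 1) - x ^ (j + 1) - ((j : ℤ) + 1) * x ^ j * δ := by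
  intro j
  induction j with
  | zero => exact ⟨0, by push_cast; ring⟩
  | succ n ih =>
    obtain ⟨c, hc⟩ := ih
    refine ⟨(x + δ) * c + ((n : ℤ) + 1) * x ^ n, ?_⟩
    push_cast
    push_cast at hc
    linear_combination (x + δ) * hc

/-- Telescoping geometric identity in `F[X]`. -/
lemma geom_telescope {F : Type*} [CommRing F] (c : F) :
    ∀ n : ℕ, (1 - C c * X) * (∑ j ∈ Finset.range n, C (c ^ (j + 1)) * X ^ j)
      = C c - C (c ^ (n + 1)) * X ^ n := by
  intro n
  induction n with
  | zero => simp
  | succ n ih =>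
    have h1 : (C (c ^ (n + 1 + 1)) : F[X]) = C c * C (c ^ (n + 1)) := by
      rw [← C_mul, ← pow_succ']
    rw [Finset.sum_range_succ, mul_add, ih, h1]
    have h2 : (C (c ^ (n + 1)) : F[X]) = C c * C (c ^ n) := by
      rw [← C_mul, ← pow_succ']
    rw [h2]
    ring

/-- Logarithmic derivative of `∏ (1 - yᵢ X)` mod `X^k`. -/
lemma logderiv_prod {F : Type*} [CommRing F] (k : ℕ) {ι : Type*} [DecidableEq ι]
    (s : Finset ι) (y : ι → F) :
    (X : F[X]) ^ k ∣
      derivative (∏ i ∈ s, (1 - C (y i) * X)) +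
        (∏ i ∈ s, (1 - C (y i) * X)) * (∑ i ∈ s, ∑ j ∈ Finset.range k, C (y i ^ (j + 1)) * X ^ j) := by
  induction s using Finset.induction_on with
  | empty => simp
  | @insert a s ha ih =>
    rw [Finset.prod_insert ha, Finset.sum_insert ha]
    have hder : derivative ((1 - C (y a) * X) * ∏ i ∈ s, (1 - C (y i) * X))
        = (- C (y a)) * (∏ i ∈ s, (1 - C (y i) * X))
          + (1 - C (y a) * X) * derivative (∏ i ∈ s, (1 - C (y i) * X)) := by
      rw [derivative_mul]
      congr 1
      simp
    have hgeo : (1 - C (y a) * X) * (∑ j ∈ Finset.range k, C (y a ^ (j + 1)) * X ^ j) - C (y a)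
        = -(C (y a ^ (k + 1)) * X ^ k) := by
      rw [geom_telescope]; ring
    have hsplit : derivative ((1 - C (y a) * X) * ∏ i ∈ s, (1 - C (y i) * X))
        + ((1 - C (y a) * X) * ∏ i ∈ s, (1 - C (y i) * X))
          * ((∑ j ∈ Finset.range k, C (y a ^ (j + 1)) * X ^ j)
            + ∑ i ∈ s, ∑ j ∈ Finset.range k, C (y i ^ (j + 1)) * X ^ j)
        = (1 - C (y a) * X) *
            (derivative (∏ i ∈ s, (1 - C (y i) * X))
              + (∏ i ∈ s, (1 - C (y i) * X)) * (∑ i ∈ s, ∑ j ∈ Finset.range k, C (y i ^ (j + 1)) * X ^ j))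
          + (∏ i ∈ s, (1 - C (y i) * X)) *
            ((1 - C (y a) * X) * (∑ j ∈ Finset.range k, C (y a ^ (j + 1)) * X ^ j) - C (y a)) := by
      rw [hder]; ring
    rw [hsplit, hgeo]
    refine dvd_add (ih.mul_left _) ⟨-((∏ i ∈ s, (1 - C (y i) * X)) * C (y a ^ (k + 1))), by ring⟩

/-- Coprimality of distinct linear factors `1 - aX`, `1 - bX`. -/
lemma coprime_linear {F : Type*} [Field F] {a b : F} (h : a ≠ b) :
    IsCoprime (1 - C a * X : F[X]) (1 - C b * X) := by
  refine ⟨C (b - a)⁻¹ * C b, -(C (b - a)⁻¹ * C a), ?_⟩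
  have hba : b - a ≠ 0 := sub_ne_zero.mpr (Ne.symm h)
  have key : (C (b - a)⁻¹ * C b) * (1 - C a * X) + (-(C (b - a)⁻¹ * C a)) * (1 - C b * X)
      = C (b - a)⁻¹ * C (b - a) := by
    rw [C_sub]; ring
  rw [key, ← C_mul, inv_mul_cancel₀ hba, C_1]

/-- The Wronskian rigidity lemma. -/
lemma wronskian_rigidity {F : Type*} [Field F] {k r : ℕ} (hrk : r < k)
    (hchar : ∀ s : ℕ, 0 < s → s ≤ r → (s : F) ≠ 0)
    (u₁ v₁ u₂ v₂ G : F[X])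
    (e01 : u₁.eval 0 = 1) (e02 : v₁.eval 0 = 1) (e03 : u₂.eval 0 = 1) (e04 : v₂.eval 0 = 1)
    (hd1 : (u₁ * v₂).natDegree ≤ r) (hd2 : (u₂ * v₁).natDegree ≤ r)
    (h1 : (X : F[X]) ^ k ∣ derivative u₁ * v₁ - u₁ * derivative v₁ + u₁ * v₁ * G)
    (h2 : (X : F[X]) ^ k ∣ derivative u₂ * v₂ - u₂ * derivative v₂ + u₂ * v₂ * G) :
    u₁ * v₂ = u₂ * v₁ := by
  by_contra hne
  set A := u₁ * v₂ with hA
  set B := u₂ * v₁ with hB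
  set D := B - A with hD
  have hD0 : D ≠ 0 := sub_ne_zero.mpr (fun hh => hne hh.symm)
  have hWdvd : (X : F[X]) ^ k ∣ derivative A * B - A * derivative B := by
    have hiden : derivative A * B - A * derivative B
        = (derivative u₁ * v₁ - u₁ * derivative v₁ + u₁ * v₁ * G) * (u₂ * v₂)
          - (derivative u₂ * v₂ - u₂ * derivative v₂ + u₂ * v₂ * G) * (u₁ * v₁) := by
      simp only [hA, hB, derivative_mul]
      ring
    rw [hiden]
    exact dvd_sub (h1.mul_right _) (h2.mul_right _)
  have hA0 : A.eval 0 = 1 := by rw [hA, eval_mul, e01, e04, mul_one]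
  have hB0 : B.eval 0 = 1 := by rw [hB, eval_mul, e03, e02, mul_one]
  have hD0eval : D.eval 0 = 0 := by rw [hD, eval_sub, hA0, hB0, sub_self]
  have hspos : 0 < rootMultiplicity 0 D := (rootMultiplicity_pos hD0).mpr hD0eval
  have hDdeg : D.natDegree ≤ r := by
    refine le_trans (natDegree_sub_le _ _) ?_
    exact max_le hd2 hd1
  have hsr : rootMultiplicity 0 D ≤ r := by
    have hdvd : ((X : F[X]) - C 0) ^ rootMultiplicity 0 D ∣ D := pow_rootMultiplicity_dvd D 0
    rw [C_0, sub_zero] at hdvd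
    have h := natDegree_le_of_dvd hdvd hD0
    rw [natDegree_X_pow] at h
    exact h.trans hDdeg
  obtain ⟨E, hDE, hXE⟩ := D.exists_eq_pow_rootMultiplicity_mul_and_not_dvd hD0 0
  rw [C_0, sub_zero] at hDE hXE
  have hE0 : E.eval 0 ≠ 0 := fun h => hXE (X_dvd_iff.mpr (by rwa [coeff_zero_eq_eval_zero]))
  obtain ⟨t, hst⟩ : ∃ t, rootMultiplicity 0 D = t + 1 := ⟨rootMultiplicity 0 D - 1, by omega⟩
  rw [hst] at hDE hsr
  have hW2 : derivative A * B - A * derivative B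
      = X ^ t * (X * derivative A * E - C ((t + 1 : ℕ) : F) * A * E - X * A * derivative E) := by
    have hBA : B = A + X ^ (t + 1) * E := by rw [← hDE, hD]; ring
    rw [hBA]
    simp only [derivative_add, derivative_mul, derivative_X_pow, Nat.add_sub_cancel]
    push_cast
    ring
  set G2 : F[X] := X * derivative A * E - C ((t + 1 : ℕ) : F) * A * E - X * A * derivative E with hG2
  have hGE : G2.eval 0 ≠ 0 := by
    have : G2.eval 0 = -(((t + 1 : ℕ) : F) * E.eval 0) := by
      simp [hG2, hA0]
    rw [this]
    exact neg_ne_zero.mpr (mul_ne_zero (hchar (t + 1) (by omega) hsr) hE0)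
  rw [hW2] at hWdvd
  have htk : t + 1 ≤ k := by omega
  have hk' : (X : F[X]) ^ t * X ^ (k - t) ∣ X ^ t * G2 := by
    rw [← pow_add]
    rwa [Nat.add_sub_cancel' (by omega : t ≤ k)]
  have hXG : (X : F[X]) ^ (k - t) ∣ G2 :=
    (mul_dvd_mul_iff_left (pow_ne_zero t (X_ne_zero : (X : F[X]) ≠ 0))).mp hk'
  have hXG1 : (X : F[X]) ∣ G2 := dvd_trans (dvd_pow_self X (by omega : k - t ≠ 0)) hXG
  exact hGE (by rw [← coeff_zero_eq_eval_zero]; exact X_dvd_iff.mp hXG1)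




/-- Nonsingular generalized Vandermonde system forces the vector to vanish. -/
lemma vec_zero_of_vandermonde {F : Type*} [Field F] {r : ℕ}
    (d₁ d₂ yv v : Fin r → F)
    (hd₁ : ∀ t, d₁ t ≠ 0) (hd₂ : ∀ i, d₂ i ≠ 0) (hy : Function.Injective yv)
    (hv : ∀ t, ∑ i, d₁ t * d₂ i * yv i ^ (t : ℕ) * v i = 0) : v = 0 := by
  set M : Matrix (Fin r) (Fin r) F := fun t i => d₁ t * d₂ i * yv i ^ (t : ℕ) with hM
  have hfact : M = Matrix.diagonal d₁ * ((Matrix.vandermonde yv).transpose * Matrix.diagonal d₂) := by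
    ext t i
    rw [Matrix.diagonal_mul, Matrix.mul_diagonal, Matrix.transpose_apply, Matrix.vandermonde_apply]
    ring
  have hMdet : M.det ≠ 0 := by
    rw [hfact, Matrix.det_mul, Matrix.det_mul, Matrix.det_transpose, Matrix.det_diagonal,
      Matrix.det_diagonal, Matrix.det_vandermonde]
    refine mul_ne_zero ?_ (mul_ne_zero ?_ ?_)
    · exact Finset.prod_ne_zero_iff.mpr fun t _ => hd₁ t
    · refine Finset.prod_ne_zero_iff.mpr fun i _ => ?_
      refine Finset.prod_ne_zero_iff.mpr fun j hj => ?_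
      refine sub_ne_zero.mpr fun hh => ?_
      exact absurd (hy hh.symm) (ne_of_gt (Finset.mem_Ioi.mp hj)).symm
    · exact Finset.prod_ne_zero_iff.mpr fun i _ => hd₂ i
  refine Matrix.eq_zero_of_mulVec_eq_zero hMdet ?_
  funext t
  rw [Matrix.mulVec, dotProduct]
  exact hv t



/-- Hensel-type injectivity: two solutions congruent mod `p`, whose top-window
power sums agree mod `p^N`, are congruent mod `p^N`. -/
lemma lift_injective (p k r b N : ℕ) (hp : p.Prime) (hkp : k + 2 ≤ p)
    (hr1 : 1 ≤ r) (hr2 : r + 1 ≤ k)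
    (σ : Fin r → ℤ) (hσ : ∀ i, σ i = 1 ∨ σ i = -1) (η : ℤ)
    (z w : Fin r → ℤ)
    (hzdist : ∀ i i' : Fin r, i ≠ i' → ¬ (p : ℤ) ∣ (z i - z i'))
    (hzunit : ∀ i, ¬ (p : ℤ) ∣ (z i - η))
    (hbase : ∀ i, (p : ℤ) ∣ w i - z i)
    (htop : ∀ t : Fin r, (p : ℤ) ^ N ∣
      (∑ i, σ i * (w i - η) ^ (k - r + 1 + (t : ℕ))) - (∑ i, σ i * (z i - η) ^ (k - r + 1 + (t : ℕ)))) :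
    ∀ i, (p : ℤ) ^ N ∣ w i - z i := by
  haveI : Fact p.Prime := ⟨hp⟩
  have hp0 : (p : ℤ) ≠ 0 := Int.natCast_ne_zero.mpr hp.pos.ne'
  -- the ZMod p data
  set yb : Fin r → ZMod p := fun i => ((z i - η : ℤ) : ZMod p) with hyb
  have hy0 : ∀ i, yb i ≠ 0 := by
    intro i h
    exact hzunit i ((ZMod.intCast_zmod_eq_zero_iff_dvd _ p).mp h)
  have hyinj : Function.Injective yb := by
    intro i i' h
    by_contra hne
    apply hzdist i i' hne
    simp only [hyb] at h
    have h2 : ((z i - z i' : ℤ) : ZMod p) = 0 := by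
      push_cast
      push_cast at h
      linear_combination h
    exact (ZMod.intCast_zmod_eq_zero_iff_dvd _ p).mp h2
  have hσ0 : ∀ i, ((σ i : ℤ) : ZMod p) ≠ 0 := by
    intro i
    rcases hσ i with h | h <;> rw [h] <;> simp
  have hcoef0 : ∀ t : Fin r, ((k - r + 1 + (t : ℕ) : ℕ) : ZMod p) ≠ 0 := by
    intro t h
    have hdvd := (ZMod.natCast_eq_zero_iff _ p).mp h
    have h1 : 0 < k - r + 1 + (t : ℕ) := by omega
    have h2 : k - r + 1 + (t : ℕ) ≤ k := by have := t.isLt; omega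
    have := Nat.le_of_dvd h1 hdvd
    omega
  -- The matrix fact
  have hM : ∀ v : Fin r → ZMod p,
      (∀ t : Fin r, ∑ i, ((k - r + 1 + (t : ℕ) : ℕ) : ZMod p) * ((σ i : ℤ) : ZMod p) * yb i ^ (k - r + (t : ℕ)) * v i = 0)
      → v = 0 := by
    intro v hv
    refine vec_zero_of_vandermonde (fun t => ((k - r + 1 + (t : ℕ) : ℕ) : ZMod p))
      (fun i => ((σ i : ℤ) : ZMod p) * yb i ^ (k - r)) yb v hcoef0
      (fun i => mul_ne_zero (hσ0 i) (pow_ne_zero _ (hy0 i))) hyinj ?_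
    intro t
    rw [← hv t]
    refine Finset.sum_congr rfl fun i _ => ?_
    rw [pow_add]
    ring
  -- main induction
  suffices h : ∀ s : ℕ, ∀ i, (p : ℤ) ^ (min (s + 1) N) ∣ w i - z i by
    intro i
    have := h N i
    rwa [min_eq_right (by omega)] at this
  intro s
  induction s with
  | zero =>
    intro i
    rcases le_or_gt N 0 with h0 | h0
    · rw [show min 1 N = N by omega, show N = 0 by omega, pow_zero]
      exact one_dvd _
    · rw [show min 1 N = 1 by omega, pow_one]
      exact hbase i
  | succ s ih =>
    rcases le_or_gt N (s + 1) with hsN | hsN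
    · intro i
      rw [show min (s + 1 + 1) N = min (s + 1) N by omega]
      exact ih i
    · -- s + 1 < N
      have hcur : ∀ i, (p : ℤ) ^ (s + 1) ∣ w i - z i := by
        intro i
        have := ih i
        rwa [min_eq_left (by omega)] at this
      set u : Fin r → ℤ := fun i => (w i - z i) / (p : ℤ) ^ (s + 1) with hu
      have huspec : ∀ i, w i - z i = (p : ℤ) ^ (s + 1) * u i :=
        fun i => (Int.mul_ediv_cancel' (hcur i)).symm
      -- divisibility of the linearization
      have key : ∀ t : Fin r, (p : ℤ) ∣
          ∑ i, σ i * ((k - r + (t : ℕ) + 1 : ℕ) : ℤ) * (z i - η) ^ (k - r + (t : ℕ)) * u i := by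
        intro t
        set j' : ℕ := k - r + (t : ℕ) with hj'
        have htay : ((p : ℤ) ^ (s + 1)) ^ 2 ∣
            ((∑ i, σ i * (w i - η) ^ (j' + 1)) - (∑ i, σ i * (z i - η) ^ (j' + 1)))
            - ∑ i, σ i * ((j' : ℤ) + 1) * (z i - η) ^ j' * (w i - z i) := by
          have hrw : ((∑ i, σ i * (w i - η) ^ (j' + 1)) - (∑ i, σ i * (z i - η) ^ (j' + 1)))
              - ∑ i, σ i * ((j' : ℤ) + 1) * (z i - η) ^ j' * (w i - z i)
              = ∑ i, σ i * ((w i - η) ^ (j' + 1) - (z i - η) ^ (j' + 1)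
                  - ((j' : ℤ) + 1) * (z i - η) ^ j' * (w i - z i)) := by
            rw [← Finset.sum_sub_distrib, ← Finset.sum_sub_distrib]
            refine Finset.sum_congr rfl fun i _ => ?_
            ring
          rw [hrw]
          refine Finset.dvd_sum fun i _ => ?_
          have h1 := taylor_int (z i - η) (w i - z i) j'
          rw [show z i - η + (w i - z i) = w i - η by ring] at h1
          have h2 : ((p : ℤ) ^ (s + 1)) ^ 2 ∣ (w i - z i) ^ 2 :=
            pow_dvd_pow_of_dvd (hcur i) 2
          exact Dvd.dvd.mul_left (h2.trans h1) (σ i)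
        have hT : (p : ℤ) ^ (s + 1 + 1) ∣
            ∑ i, σ i * ((j' : ℤ) + 1) * (z i - η) ^ j' * (w i - z i) := by
          have h2 : (p : ℤ) ^ (s + 1 + 1) ∣ ((p : ℤ) ^ (s + 1)) ^ 2 := by
            rw [← pow_mul]
            exact pow_dvd_pow _ (by omega)
          have h3 : (p : ℤ) ^ (s + 1 + 1) ∣
              (∑ i, σ i * (w i - η) ^ (j' + 1)) - (∑ i, σ i * (z i - η) ^ (j' + 1)) := by
            refine dvd_trans (pow_dvd_pow _ (by omega : s + 1 + 1 ≤ N)) ?_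
            have := htop t
            rwa [show k - r + 1 + (t : ℕ) = j' + 1 by omega] at this
          have h4 := dvd_sub h3 (h2.trans htay)
          simpa using h4
        have hfac : ∑ i, σ i * ((j' : ℤ) + 1) * (z i - η) ^ j' * (w i - z i)
            = (p : ℤ) ^ (s + 1) * ∑ i, σ i * ((j' : ℤ) + 1) * (z i - η) ^ j' * u i := by
          rw [Finset.mul_sum]
          refine Finset.sum_congr rfl fun i _ => ?_
          rw [huspec i]
          ring
        have h5 : (p : ℤ) ^ (s + 1) * (p : ℤ) ∣ (p : ℤ) ^ (s + 1) *
            ∑ i, σ i * ((j' : ℤ) + 1) * (z i - η) ^ j' * u i := by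
          rw [← hfac, ← pow_succ]
          exact hT
        have h6 := (mul_dvd_mul_iff_left (pow_ne_zero (s + 1) hp0)).mp h5
        have hcast : ((j' : ℤ) + 1) = ((j' + 1 : ℕ) : ℤ) := by push_cast; ring
        rwa [hcast] at h6
      -- cast to ZMod p
      have hzm : ∀ t : Fin r, ∑ i, ((k - r + 1 + (t : ℕ) : ℕ) : ZMod p) * ((σ i : ℤ) : ZMod p)
          * yb i ^ (k - r + (t : ℕ)) * ((u i : ℤ) : ZMod p) = 0 := by
        intro t
        have h0 : (((∑ i, σ i * ((k - r + (t : ℕ) + 1 : ℕ) : ℤ) * (z i - η) ^ (k - r + (t : ℕ)) * u i : ℤ)) : ZMod p) = 0 := by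
          rw [ZMod.intCast_zmod_eq_zero_iff_dvd]
          exact_mod_cast key t
        rw [Int.cast_sum] at h0
        rw [← h0]
        refine Finset.sum_congr rfl fun i _ => ?_
        push_cast [hyb]
        ring
      have hv0 := hM (fun i => ((u i : ℤ) : ZMod p)) hzm
      intro i
      have hui : ((u i : ℤ) : ZMod p) = 0 := congrFun hv0 i
      have hpu : (p : ℤ) ∣ u i := (ZMod.intCast_zmod_eq_zero_iff_dvd _ p).mp hui
      rw [min_eq_left (by omega : s + 1 + 1 ≤ N), huspec i, pow_succ]
      exact mul_dvd_mul_left _ hpu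




variable {F : Type*} [Field F]

lemma eval0_prod {r : ℕ} (s : Finset (Fin r)) (y : Fin r → F) :
    (∏ i ∈ s, (1 - C (y i) * X)).eval 0 = 1 := by
  rw [eval_prod]
  refine Finset.prod_eq_one fun i _ => ?_
  simp

lemma prod_ne_zero' {r : ℕ} (s : Finset (Fin r)) (y : Fin r → F) :
    (∏ i ∈ s, (1 - C (y i) * X)) ≠ 0 := by
  intro h
  have := eval0_prod s y
  rw [h] at this
  simp at this

lemma natDeg_prod_le {r : ℕ} (s : Finset (Fin r)) (y : Fin r → F) :
    (∏ i ∈ s, (1 - C (y i) * X)).natDegree ≤ s.card := by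
  refine le_trans (natDegree_prod_le _ _) ?_
  have h1 : ∀ i ∈ s, (1 - C (y i) * X).natDegree ≤ 1 := by
    intro i _
    refine le_trans (natDegree_sub_le _ _) ?_
    rw [natDegree_one]
    simp only [max_le_iff]
    refine ⟨by omega, ?_⟩
    exact le_trans (natDegree_mul_le) (by simp)
  simpa using Finset.sum_le_card_nsmul s _ 1 h1

lemma coprime_UV {r : ℕ} (σ : Fin r → ℤ) (y : Fin r → F) (hyinj : Function.Injective y) :
    IsCoprime (∏ i ∈ Finset.univ.filter (fun i => σ i = 1), (1 - C (y i) * X))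
      (∏ i ∈ Finset.univ.filter (fun i => ¬ σ i = 1), (1 - C (y i) * X)) := by
  refine IsCoprime.prod_left fun i hi => IsCoprime.prod_right fun l hl => coprime_linear ?_
  intro h
  have hil : i = l := hyinj h
  rw [hil] at hi
  exact (Finset.mem_filter.mp hl).2 (Finset.mem_filter.mp hi).2

/-- The key mod-`X^k` divisibility for a solution's sign-split products. -/
lemma key_dvd {k r : ℕ} (σ : Fin r → ℤ) (hσ : ∀ i, σ i = 1 ∨ σ i = -1)
    (y : Fin r → F) (c : ℕ → F)
    (hps : ∀ j : ℕ, 1 ≤ j → j ≤ k → ∑ i, ((σ i : ℤ) : F) * y i ^ j = c j) :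
    (X : F[X]) ^ k ∣
      derivative (∏ i ∈ Finset.univ.filter (fun i => σ i = 1), (1 - C (y i) * X))
          * (∏ i ∈ Finset.univ.filter (fun i => ¬ σ i = 1), (1 - C (y i) * X))
        - (∏ i ∈ Finset.univ.filter (fun i => σ i = 1), (1 - C (y i) * X))
          * derivative (∏ i ∈ Finset.univ.filter (fun i => ¬ σ i = 1), (1 - C (y i) * X))
        + (∏ i ∈ Finset.univ.filter (fun i => σ i = 1), (1 - C (y i) * X))
          * (∏ i ∈ Finset.univ.filter (fun i => ¬ σ i = 1), (1 - C (y i) * X))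
          * (∑ j ∈ Finset.range k, C (c (j + 1)) * X ^ j) := by
  classical
  set P := Finset.univ.filter (fun i : Fin r => σ i = 1) with hP
  set M := Finset.univ.filter (fun i : Fin r => ¬ σ i = 1) with hM
  set U := ∏ i ∈ P, (1 - C (y i) * X) with hU
  set V := ∏ i ∈ M, (1 - C (y i) * X) with hV
  have hUd := logderiv_prod k P y
  have hVd := logderiv_prod k M y
  rw [← hU] at hUd
  rw [← hV] at hVd
  have hGbeq : (∑ i ∈ P, ∑ j ∈ Finset.range k, C (y i ^ (j + 1)) * X ^ j)
      - (∑ i ∈ M, ∑ j ∈ Finset.range k, C (y i ^ (j + 1)) * X ^ j)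
      = ∑ j ∈ Finset.range k, C (c (j + 1)) * X ^ j := by
    rw [Finset.sum_comm, Finset.sum_comm (s := M), ← Finset.sum_sub_distrib]
    refine Finset.sum_congr rfl fun j hj => ?_
    rw [← Finset.sum_mul, ← Finset.sum_mul, ← sub_mul]
    congr 1
    rw [← map_sum, ← map_sum, ← map_sub]
    congr 1
    have hps' := hps (j + 1) (by omega) (by have := Finset.mem_range.mp hj; omega)
    rw [← hps']
    rw [← Finset.sum_filter_add_sum_filter_not Finset.univ (fun i => σ i = 1)
      (fun i => ((σ i : ℤ) : F) * y i ^ (j + 1))]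
    have e1 : ∑ i ∈ P, ((σ i : ℤ) : F) * y i ^ (j + 1) = ∑ i ∈ P, y i ^ (j + 1) := by
      refine Finset.sum_congr rfl fun i hi => ?_
      rw [hP] at hi
      rw [(Finset.mem_filter.mp hi).2]
      norm_num
    have e2 : ∑ i ∈ M, ((σ i : ℤ) : F) * y i ^ (j + 1) = -∑ i ∈ M, y i ^ (j + 1) := by
      rw [← Finset.sum_neg_distrib]
      refine Finset.sum_congr rfl fun i hi => ?_
      rw [hM] at hi
      rcases hσ i with h | h
      · exact absurd h (Finset.mem_filter.mp hi).2
      · rw [h]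
        push_cast
        ring
    rw [e1, e2]
    ring
  have hcombo : derivative U * V - U * derivative V
        + U * V * (∑ j ∈ Finset.range k, C (c (j + 1)) * X ^ j)
      = (derivative U + U * ∑ i ∈ P, ∑ j ∈ Finset.range k, C (y i ^ (j + 1)) * X ^ j) * V
        - (derivative V + V * ∑ i ∈ M, ∑ j ∈ Finset.range k, C (y i ^ (j + 1)) * X ^ j) * U := by
    rw [← hGbeq]
    ring
  rw [hcombo]
  exact dvd_sub (hUd.mul_right _) (hVd.mul_right _)

/-- Any two mod-`p` solutions give the same sign-split polynomial pair (cross form). -/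
lemma same_polys {k r : ℕ} (hrk : r < k)
    (hchar : ∀ s : ℕ, 0 < s → s ≤ r → (s : F) ≠ 0)
    (σ : Fin r → ℤ) (hσ : ∀ i, σ i = 1 ∨ σ i = -1)
    (y x : Fin r → F) (c : ℕ → F)
    (hpsy : ∀ j : ℕ, 1 ≤ j → j ≤ k → ∑ i, ((σ i : ℤ) : F) * y i ^ j = c j)
    (hpsx : ∀ j : ℕ, 1 ≤ j → j ≤ k → ∑ i, ((σ i : ℤ) : F) * x i ^ j = c j) :
    (∏ i ∈ Finset.univ.filter (fun i => σ i = 1), (1 - C (y i) * X))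
      * (∏ i ∈ Finset.univ.filter (fun i => ¬ σ i = 1), (1 - C (x i) * X))
    = (∏ i ∈ Finset.univ.filter (fun i => σ i = 1), (1 - C (x i) * X))
      * (∏ i ∈ Finset.univ.filter (fun i => ¬ σ i = 1), (1 - C (y i) * X)) := by
  classical
  have hcardPM : (Finset.univ.filter (fun i : Fin r => σ i = 1)).card
      + (Finset.univ.filter (fun i : Fin r => ¬ σ i = 1)).card = r := by
    rw [Finset.card_filter_add_card_filter_not]
    exact Finset.card_fin r
  refine wronskian_rigidity hrk hchar _ _ _ _ (∑ j ∈ Finset.range k, C (c (j + 1)) * X ^ j)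
    (eval0_prod _ y) (eval0_prod _ y) (eval0_prod _ x) (eval0_prod _ x) ?_ ?_
    (key_dvd σ hσ y c hpsy) (key_dvd σ hσ x c hpsx)
  · refine le_trans (natDegree_mul_le) ?_
    calc _ ≤ (Finset.univ.filter (fun i : Fin r => σ i = 1)).card
        + (Finset.univ.filter (fun i : Fin r => ¬ σ i = 1)).card :=
          Nat.add_le_add (natDeg_prod_le _ y) (natDeg_prod_le _ x)
      _ ≤ r := le_of_eq hcardPM
  · refine le_trans (natDegree_mul_le) ?_
    calc _ ≤ (Finset.univ.filter (fun i : Fin r => σ i = 1)).card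
        + (Finset.univ.filter (fun i : Fin r => ¬ σ i = 1)).card :=
          Nat.add_le_add (natDeg_prod_le _ x) (natDeg_prod_le _ y)
      _ ≤ r := le_of_eq hcardPM

/-- The inverse coordinates of any solution are roots of the base solution's polynomial. -/
lemma root_membership {k r : ℕ} (hrk : r < k)
    (hchar : ∀ s : ℕ, 0 < s → s ≤ r → (s : F) ≠ 0)
    (σ : Fin r → ℤ) (hσ : ∀ i, σ i = 1 ∨ σ i = -1)
    (y x : Fin r → F) (c : ℕ → F)
    (hyinj : Function.Injective y)
    (hy0 : ∀ i, y i ≠ 0)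
    (hpsy : ∀ j : ℕ, 1 ≤ j → j ≤ k → ∑ i, ((σ i : ℤ) : F) * y i ^ j = c j)
    (hpsx : ∀ j : ℕ, 1 ≤ j → j ≤ k → ∑ i, ((σ i : ℤ) : F) * x i ^ j = c j) :
    ∀ i : Fin r, IsRoot ((∏ i ∈ Finset.univ.filter (fun i => σ i = 1), (1 - C (x i) * X))
      * ∏ i ∈ Finset.univ.filter (fun i => ¬ σ i = 1), (1 - C (x i) * X)) ((y i)⁻¹) := by
  classical
  intro i
  have hsame := same_polys hrk hchar σ hσ y x c hpsy hpsx
  have hcop := coprime_UV σ y hyinj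
  set P := Finset.univ.filter (fun i : Fin r => σ i = 1) with hP
  set M := Finset.univ.filter (fun i : Fin r => ¬ σ i = 1) with hM
  have hfac : (1 - C (y i) * X : F[X]) ∣ (∏ l ∈ P, (1 - C (x l) * X)) * ∏ l ∈ M, (1 - C (x l) * X) := by
    rcases hσ i with h | h
    · have h1 : (1 - C (y i) * X : F[X]) ∣ ∏ l ∈ P, (1 - C (y l) * X) :=
        Finset.dvd_prod_of_mem _ (by rw [hP]; exact Finset.mem_filter.mpr ⟨Finset.mem_univ i, h⟩)
      have h2 : (∏ l ∈ P, (1 - C (y l) * X)) ∣ ∏ l ∈ P, (1 - C (x l) * X) := by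
        refine hcop.dvd_of_dvd_mul_right ?_
        exact ⟨∏ l ∈ M, (1 - C (x l) * X), hsame.symm⟩
      exact (h1.trans h2).trans (dvd_mul_right _ _)
    · have h1 : (1 - C (y i) * X : F[X]) ∣ ∏ l ∈ M, (1 - C (y l) * X) :=
        Finset.dvd_prod_of_mem _ (by
          rw [hM]
          refine Finset.mem_filter.mpr ⟨Finset.mem_univ i, ?_⟩
          rw [h]; norm_num)
      have h2 : (∏ l ∈ M, (1 - C (y l) * X)) ∣ ∏ l ∈ M, (1 - C (x l) * X) := by
        refine hcop.symm.dvd_of_dvd_mul_right ?_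
        refine ⟨∏ l ∈ P, (1 - C (x l) * X), ?_⟩
        rw [mul_comm] at hsame
        rw [hsame]
        ring
      exact (h1.trans h2).trans (dvd_mul_left _ _)
  obtain ⟨g, hg⟩ := hfac
  rw [IsRoot, hg, eval_mul]
  have : (1 - C (y i) * X : F[X]).eval (y i)⁻¹ = 0 := by
    rw [eval_sub, eval_one, eval_mul, eval_C, eval_X, mul_inv_cancel₀ (hy0 i), sub_self]
  rw [this, zero_mul]


end Stmt10

theorem statement10 (k r : ℕ) (hk : 3 ≤ k) (hr1 : 1 ≤ r) (hr2 : r ≤ k - 1) :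
    ∃ p₀ : ℕ, ∀ p : ℕ, p.Prime → p₀ ≤ p →
      ∀ b : ℕ, 1 ≤ b →
      ∀ η : ℤ, 1 ≤ η → η ≤ (p : ℤ) ^ b →
      ∀ σ : Fin r → ℤ, (∀ i, σ i = 1 ∨ σ i = -1) →
      ∀ m : ℕ → ℤ, (∀ j ∈ Finset.Icc 1 k, 1 ≤ m j ∧ m j ≤ (p : ℤ) ^ (k * b)) →
      numClasses (p ^ (k * b)) r (Bset0 p k r b σ m η) ≤
        k.factorial * p ^ (r * (r - 1) * b / 2) := by
  classical
  refine ⟨k + 2, fun p hp hkp b hb η hη1 hη2 σ hσ m hm => ?_⟩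
  haveI : Fact p.Prime := ⟨hp⟩
  haveI : NeZero p := ⟨hp.pos.ne'⟩
  have hrk : r < k := by omega
  have hr2' : r + 1 ≤ k := by omega
  -- membership unfolding
  have hmem : ∀ z ∈ Bset0 p k r b σ m η,
      (∀ i, 1 ≤ z i ∧ z i ≤ (p : ℤ) ^ (k * b)) ∧
      (∀ j ∈ Finset.Icc 1 k, ((p : ℤ) ^ (j * b)) ∣ ((∑ i, σ i * (z i - η) ^ j) - m j)) ∧
      (∀ i, ¬ ((p : ℤ) ∣ (z i - η))) ∧
      (∃ ξ' ∈ XiSet p 0 r 0, ∀ i, ((p : ℤ)) ∣ (z i - ξ' i)) := fun z hz => hz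
  -- finiteness
  have hSfin : (Bset0 p k r b σ m η).Finite := by
    refine Set.Finite.subset (Set.Finite.pi fun i : Fin r =>
      Set.finite_Icc (1 : ℤ) ((p : ℤ) ^ (k * b))) ?_
    intro z hz
    rw [Set.mem_pi]
    exact fun i _ => Set.mem_Icc.mpr ⟨((hmem z hz).1 i).1, ((hmem z hz).1 i).2⟩
  -- basic facts about solutions
  have hchar : ∀ s : ℕ, 0 < s → s ≤ r → ((s : ℕ) : ZMod p) ≠ 0 := by
    intro s hs1 hs2 h
    have hdvd := (ZMod.natCast_eq_zero_iff _ p).mp h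
    have := Nat.le_of_dvd hs1 hdvd
    omega
  have hY0 : ∀ z ∈ Bset0 p k r b σ m η, ∀ i, ((z i - η : ℤ) : ZMod p) ≠ 0 := by
    intro z hz i h
    exact ((hmem z hz).2.2.1 i) ((ZMod.intCast_zmod_eq_zero_iff_dvd _ p).mp h)
  have hdist : ∀ z ∈ Bset0 p k r b σ m η, ∀ i i' : Fin r, i ≠ i' → ¬ (p : ℤ) ∣ (z i - z i') := by
    intro z hz i i' hne hdvd
    obtain ⟨ξ', hξmem, hξ⟩ := (hmem z hz).2.2.2
    refine hξmem.2 i i' hne ?_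
    rw [show (0 : ℕ) + 1 = 1 from rfl, pow_one]
    have key : ξ' i - ξ' i' = (z i - z i') - (z i - ξ' i) + (z i' - ξ' i') := by ring
    rw [key]
    exact dvd_add (dvd_sub hdvd (hξ i)) (hξ i')
  have hYinj : ∀ z ∈ Bset0 p k r b σ m η,
      Function.Injective (fun i => ((z i - η : ℤ) : ZMod p)) := by
    intro z hz i i' h
    by_contra hne
    simp only at h
    have h2 : ((z i - z i' : ℤ) : ZMod p) = 0 := by
      push_cast
      push_cast at h
      linear_combination h
    exact hdist z hz i i' hne ((ZMod.intCast_zmod_eq_zero_iff_dvd _ p).mp h2)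
  have hpsum : ∀ z ∈ Bset0 p k r b σ m η, ∀ j : ℕ, 1 ≤ j → j ≤ k →
      ∑ i, ((σ i : ℤ) : ZMod p) * ((z i - η : ℤ) : ZMod p) ^ j = ((m j : ℤ) : ZMod p) := by
    intro z hz j hj1 hjk
    have hd := (hmem z hz).2.1 j (Finset.mem_Icc.mpr ⟨hj1, hjk⟩)
    have hp1 : (p : ℤ) ∣ (∑ i, σ i * (z i - η) ^ j) - m j :=
      dvd_trans (dvd_pow_self (p : ℤ) (by positivity)) hd
    calc ∑ i, ((σ i : ℤ) : ZMod p) * ((z i - η : ℤ) : ZMod p) ^ j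
        = (((∑ i, σ i * (z i - η) ^ j : ℤ)) : ZMod p) := by push_cast; ring
      _ = ((m j : ℤ) : ZMod p) := by
          rw [show ((∑ i, σ i * (z i - η) ^ j : ℤ))
              = m j + ((∑ i, σ i * (z i - η) ^ j) - m j) by ring]
          rw [Int.cast_add, (ZMod.intCast_zmod_eq_zero_iff_dvd _ p).mpr hp1, add_zero]
  -- the top-window exact divisibilities
  have hqdvd : ∀ z ∈ Bset0 p k r b σ m η, ∀ t : Fin r,
      (p : ℤ) ^ ((k - r + 1 + (t : ℕ)) * b) ∣
        (∑ i, σ i * (z i - η) ^ (k - r + 1 + (t : ℕ))) - m (k - r + 1 + (t : ℕ)) := by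
    intro z hz t
    refine (hmem z hz).2.1 _ (Finset.mem_Icc.mpr ⟨by omega, ?_⟩)
    have := t.isLt
    omega
  -- empty case
  rcases Set.eq_empty_or_nonempty (Bset0 p k r b σ m η) with hSe | hSne
  · unfold numClasses
    rw [hSe, Set.image_empty, Set.ncard_empty]
    exact Nat.zero_le _
  obtain ⟨z₀, hz₀⟩ := hSne
  -- root set of the base solution
  set R : Finset (ZMod p) :=
    ((∏ i ∈ Finset.univ.filter (fun i => σ i = 1),
        (1 - Polynomial.C ((z₀ i - η : ℤ) : ZMod p) * Polynomial.X))
      * ∏ i ∈ Finset.univ.filter (fun i => ¬ σ i = 1),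
        (1 - Polynomial.C ((z₀ i - η : ℤ) : ZMod p) * Polynomial.X)).roots.toFinset with hR
  have hRcard : R.card ≤ r := by
    rw [hR]
    refine le_trans (Multiset.toFinset_card_le _) ?_
    refine le_trans (Polynomial.card_roots' _) ?_
    refine le_trans (Polynomial.natDegree_mul_le) ?_
    have h1 := Stmt10.natDeg_prod_le (Finset.univ.filter (fun i : Fin r => σ i = 1))
      (fun i => ((z₀ i - η : ℤ) : ZMod p))
    have h2 := Stmt10.natDeg_prod_le (Finset.univ.filter (fun i : Fin r => ¬ σ i = 1))
      (fun i => ((z₀ i - η : ℤ) : ZMod p))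
    have h3 : (Finset.univ.filter (fun i : Fin r => σ i = 1)).card
        + (Finset.univ.filter (fun i : Fin r => ¬ σ i = 1)).card = r := by
      rw [Finset.card_filter_add_card_filter_not, Finset.card_fin]
    omega
  have hmemR : ∀ z ∈ Bset0 p k r b σ m η, ∀ i : Fin r,
      (((z i - η : ℤ) : ZMod p))⁻¹ ∈ R := by
    intro z hz i
    rw [hR, Multiset.mem_toFinset, Polynomial.mem_roots']
    refine ⟨mul_ne_zero (Stmt10.prod_ne_zero' _ _) (Stmt10.prod_ne_zero' _ _), ?_⟩
    exact Stmt10.root_membership hrk hchar σ hσ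
      (fun i => ((z i - η : ℤ) : ZMod p)) (fun i => ((z₀ i - η : ℤ) : ZMod p))
      (fun j => ((m j : ℤ) : ZMod p))
      (hYinj z hz) (hY0 z hz) (hpsum z hz) (hpsum z₀ hz₀) i
  -- the injection
  have hcard : Nat.card ↥(Bset0 p k r b σ m η) ≤
      Nat.card ((Fin r ↪ {a // a ∈ R}) × ((t : Fin r) → ZMod (p ^ ((r - 1 - (t : ℕ)) * b)))) := by
    apply Nat.card_le_card_of_injective
      (f := fun zs : ↥(Bset0 p k r b σ m η) =>
        ((⟨fun i => ⟨(((zs.1 i - η : ℤ) : ZMod p))⁻¹, hmemR zs.1 zs.2 i⟩, by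
            intro i i' h
            have h2 := congrArg Subtype.val h
            simp only at h2
            exact hYinj zs.1 zs.2 (inv_injective h2)⟩ : Fin r ↪ {a // a ∈ R}),
          fun t : Fin r => ((((∑ i, σ i * (zs.1 i - η) ^ (k - r + 1 + (t : ℕ)))
              - m (k - r + 1 + (t : ℕ))) / (p : ℤ) ^ ((k - r + 1 + (t : ℕ)) * b) : ℤ)
            : ZMod (p ^ ((r - 1 - (t : ℕ)) * b)))))
    rintro ⟨z, hz⟩ ⟨w, hw⟩ heq
    rw [Prod.mk.injEq] at heq
    obtain ⟨h1, h2⟩ := heq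
    -- mod p congruence
    have hbase : ∀ i, (p : ℤ) ∣ w i - z i := by
      intro i
      have hv := congrArg Subtype.val (DFunLike.congr_fun h1 i)
      simp only at hv
      have hYeq : ((z i - η : ℤ) : ZMod p) = ((w i - η : ℤ) : ZMod p) := inv_injective hv
      have h3 : ((w i - z i : ℤ) : ZMod p) = 0 := by
        push_cast
        push_cast at hYeq
        linear_combination - hYeq
      exact (ZMod.intCast_zmod_eq_zero_iff_dvd _ p).mp h3
    -- top window congruences mod p^{kb}
    have htop : ∀ t : Fin r, (p : ℤ) ^ (k * b) ∣
        (∑ i, σ i * (w i - η) ^ (k - r + 1 + (t : ℕ)))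
          - (∑ i, σ i * (z i - η) ^ (k - r + 1 + (t : ℕ))) := by
      intro t
      have hq := congrFun h2 t
      simp only at hq
      have hez := Int.mul_ediv_cancel' (hqdvd z hz t)
      have hew := Int.mul_ediv_cancel' (hqdvd w hw t)
      have hqq : (((((∑ i, σ i * (w i - η) ^ (k - r + 1 + (t : ℕ)))
            - m (k - r + 1 + (t : ℕ))) / (p : ℤ) ^ ((k - r + 1 + (t : ℕ)) * b)
          - ((∑ i, σ i * (z i - η) ^ (k - r + 1 + (t : ℕ)))
            - m (k - r + 1 + (t : ℕ))) / (p : ℤ) ^ ((k - r + 1 + (t : ℕ)) * b) : ℤ))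
          : ZMod (p ^ ((r - 1 - (t : ℕ)) * b))) = 0 := by
        rw [Int.cast_sub, hq, sub_self]
      have hdq : ((p : ℤ) ^ ((r - 1 - (t : ℕ)) * b)) ∣
          (((∑ i, σ i * (w i - η) ^ (k - r + 1 + (t : ℕ)))
            - m (k - r + 1 + (t : ℕ))) / (p : ℤ) ^ ((k - r + 1 + (t : ℕ)) * b)
          - ((∑ i, σ i * (z i - η) ^ (k - r + 1 + (t : ℕ)))
            - m (k - r + 1 + (t : ℕ))) / (p : ℤ) ^ ((k - r + 1 + (t : ℕ)) * b)) := by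
        have := (ZMod.intCast_zmod_eq_zero_iff_dvd _ (p ^ ((r - 1 - (t : ℕ)) * b))).mp hqq
        rwa [Nat.cast_pow] at this
      have hkb : (k : ℕ) * b = (k - r + 1 + (t : ℕ)) * b + (r - 1 - (t : ℕ)) * b := by
        have := t.isLt
        have h4 : (k - r + 1 + (t : ℕ)) + (r - 1 - (t : ℕ)) = k := by omega
        rw [← Nat.add_mul, h4]
      calc (p : ℤ) ^ (k * b)
          = (p : ℤ) ^ ((k - r + 1 + (t : ℕ)) * b) * (p : ℤ) ^ ((r - 1 - (t : ℕ)) * b) := by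
            rw [hkb, pow_add]
        _ ∣ (p : ℤ) ^ ((k - r + 1 + (t : ℕ)) * b) *
              (((∑ i, σ i * (w i - η) ^ (k - r + 1 + (t : ℕ)))
                - m (k - r + 1 + (t : ℕ))) / (p : ℤ) ^ ((k - r + 1 + (t : ℕ)) * b)
              - ((∑ i, σ i * (z i - η) ^ (k - r + 1 + (t : ℕ)))
                - m (k - r + 1 + (t : ℕ))) / (p : ℤ) ^ ((k - r + 1 + (t : ℕ)) * b)) :=
            mul_dvd_mul_left _ hdq
        _ = (∑ i, σ i * (w i - η) ^ (k - r + 1 + (t : ℕ)))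
              - (∑ i, σ i * (z i - η) ^ (k - r + 1 + (t : ℕ))) := by
            rw [mul_sub, hez, hew]
            ring
    -- conclude coordinatewise congruence mod p^{kb} and hence equality
    have hfull := Stmt10.lift_injective p k r b (k * b) hp hkp hr1 hr2' σ hσ η z w
      (hdist z hz) ((hmem z hz).2.2.1) hbase htop
    have hzw : z = w := by
      funext i
      have hd := hfull i
      have hb1 := ((hmem z hz).1 i)
      have hb2 := ((hmem w hw).1 i)
      by_contra hne
      have hne' : w i - z i ≠ 0 := fun hh => hne (by linarith [sub_eq_zero.mp hh])
      have hlb : (p : ℤ) ^ (k * b) ≤ |w i - z i| :=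
        Int.le_of_dvd (abs_pos.mpr hne') ((dvd_abs _ _).mpr hd)
      have hub : |w i - z i| < (p : ℤ) ^ (k * b) := by
        rw [abs_lt]
        constructor <;> linarith
      linarith
    subst hzw
    rfl
  -- final counting
  have hcount2 : Nat.card ((Fin r ↪ {a // a ∈ R}) × ((t : Fin r) → ZMod (p ^ ((r - 1 - (t : ℕ)) * b))))
      ≤ k.factorial * p ^ (r * (r - 1) * b / 2) := by
    rw [Nat.card_eq_fintype_card, Fintype.card_prod]
    have hcard1 : Fintype.card (Fin r ↪ {a // a ∈ R}) ≤ r.factorial := by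
      rw [Fintype.card_embedding_eq, Fintype.card_coe, Fintype.card_fin]
      rcases lt_or_eq_of_le hRcard with h | h
      · rw [Nat.descFactorial_eq_zero_iff_lt.mpr h]
        exact Nat.zero_le _
      · rw [h, Nat.descFactorial_self]
    have hcard2 : Fintype.card ((t : Fin r) → ZMod (p ^ ((r - 1 - (t : ℕ)) * b)))
        = p ^ (r * (r - 1) * b / 2) := by
      rw [Fintype.card_pi]
      have h1 : ∀ t : Fin r, Fintype.card (ZMod (p ^ ((r - 1 - (t : ℕ)) * b)))
          = p ^ ((r - 1 - (t : ℕ)) * b) := fun t => ZMod.card _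
      rw [Finset.prod_congr rfl (fun t _ => h1 t), Finset.prod_pow_eq_pow_sum]
      congr 1
      rw [Fin.sum_univ_eq_sum_range (fun t => (r - 1 - t) * b) r, ← Finset.sum_mul]
      have h2 : ∑ t ∈ Finset.range r, (r - 1 - t) = ∑ t ∈ Finset.range r, t :=
        Finset.sum_range_reflect (fun t => t) r
      rw [h2]
      have h3 := Finset.sum_range_id_mul_two r
      rw [show r * (r - 1) * b / 2 = (∑ t ∈ Finset.range r, t) * b by
        rw [show r * (r - 1) * b = (∑ t ∈ Finset.range r, t) * b * 2 by rw [← h3]; ring,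
          Nat.mul_div_cancel _ (by norm_num)]]
    rw [hcard2]
    exact Nat.mul_le_mul_right _ (le_trans hcard1 (Nat.factorial_le (by omega)))
  -- conclude
  calc numClasses (p ^ (k * b)) r (Bset0 p k r b σ m η)
      ≤ (Bset0 p k r b σ m η).ncard := Set.ncard_image_le hSfin
    _ = Nat.card ↥(Bset0 p k r b σ m η) := (Nat.card_coe_set_eq _).symm
    _ ≤ Nat.card ((Fin r ↪ {a // a ∈ R}) × ((t : Fin r) → ZMod (p ^ ((r - 1 - (t : ℕ)) * b)))) := hcard
    _ ≤ k.factorial * p ^ (r * (r - 1) * b / 2) := hcount2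
end

section
/- Let k ≥ 3, let r be an integer with 1 ≤ r ≤ k−1, and set ρ = k−r+1. There exists p₀ depending only on k such that for every prime p ≥ p₀ and every integer b ≥ 1, one has B_{0,b}^{r,ρ}(p) ≤ k!. -/
open scoped BigOperators

/-! ### Auxiliary lemmas -/

section Aux

open Finset Matrix

lemma esymm_eq_of_psum_eq {F : Type*} [Field F] {r : ℕ} (x y : Fin r → F)
    (hchar : ∀ j : ℕ, 1 ≤ j → j ≤ r → (j : F) ≠ 0)
    (hpow : ∀ j : ℕ, 1 ≤ j → j ≤ r → ∑ i, x i ^ j = ∑ i, y i ^ j) :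
    ∀ j : ℕ, j ≤ r →
      (Multiset.map x Finset.univ.val).esymm j = (Multiset.map y Finset.univ.val).esymm j := by
  intro j
  induction j using Nat.strong_induction_on with
  | _ j ih =>
    intro hjr
    rcases Nat.eq_zero_or_pos j with h0 | h1
    · subst h0; simp [Multiset.esymm]
    · have key : ∀ w : Fin r → F, (j : F) * (Multiset.map w Finset.univ.val).esymm j =
        (-1) ^ (j + 1) * ∑ a ∈ filter (fun a => a.1 < j) (antidiagonal j),
          (-1) ^ a.1 * (Multiset.map w Finset.univ.val).esymm a.1 * ∑ i, w i ^ a.2 := by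
        intro w
        have h := congrArg (MvPolynomial.aeval w) (MvPolynomial.mul_esymm_eq_sum (Fin r) F j)
        simp only [map_mul, map_sum, MvPolynomial.aeval_esymm_eq_multiset_esymm] at h
        simpa [MvPolynomial.aeval_esymm_eq_multiset_esymm, MvPolynomial.psum, map_sum] using h
      have hx := key x
      have hy := key y
      have heq : (j : F) * (Multiset.map x Finset.univ.val).esymm j =
          (j : F) * (Multiset.map y Finset.univ.val).esymm j := by
        rw [hx, hy]
        congr 1
        refine Finset.sum_congr rfl ?_
        intro a ha
        rw [Finset.mem_filter, Finset.HasAntidiagonal.mem_antidiagonal] at ha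
        rw [ih a.1 ha.2 (by omega), hpow a.2 (by omega) (by omega)]
      exact mul_left_cancel₀ (hchar j h1 hjr) heq

lemma multiset_map_eq_of_psum_eq {F : Type*} [Field F] {r : ℕ} (x y : Fin r → F)
    (hchar : ∀ j : ℕ, 1 ≤ j → j ≤ r → (j : F) ≠ 0)
    (hpow : ∀ j : ℕ, 1 ≤ j → j ≤ r → ∑ i, x i ^ j = ∑ i, y i ^ j) :
    Multiset.map x Finset.univ.val = Multiset.map y Finset.univ.val := by
  have hcx : Multiset.card (Multiset.map x Finset.univ.val) = r := by simp
  have hcy : Multiset.card (Multiset.map y Finset.univ.val) = r := by simp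
  have hprod : ((Multiset.map x Finset.univ.val).map fun t => Polynomial.X - Polynomial.C t).prod
      = ((Multiset.map y Finset.univ.val).map fun t => Polynomial.X - Polynomial.C t).prod := by
    rw [Multiset.prod_X_sub_X_eq_sum_esymm, Multiset.prod_X_sub_X_eq_sum_esymm, hcx, hcy]
    refine Finset.sum_congr rfl fun j hj => ?_
    rw [Finset.mem_range] at hj
    rw [esymm_eq_of_psum_eq x y hchar hpow j (by omega)]
  have h := congrArg Polynomial.roots hprod
  rwa [Polynomial.roots_multiset_prod_X_sub_C, Polynomial.roots_multiset_prod_X_sub_C] at h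

lemma multiset_pair_eq {F : Type*} [DecidableEq F] {A B A' B' : Multiset F}
    (h : A + B' = A' + B) (hA : A.Nodup) (hB : B.Nodup) (hA' : A'.Nodup) (hB' : B'.Nodup)
    (hAB : ∀ a, ¬(a ∈ A ∧ a ∈ B)) (hAB' : ∀ a, ¬(a ∈ A' ∧ a ∈ B')) :
    A = A' ∧ B = B' := by
  have hAA : A = A' := by
    ext a
    have hc := congrArg (Multiset.count a) h
    simp only [Multiset.count_add] at hc
    have h1 : A.count a ≤ 1 := Multiset.nodup_iff_count_le_one.mp hA a
    have h2 : B.count a ≤ 1 := Multiset.nodup_iff_count_le_one.mp hB a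
    have h3 : A'.count a ≤ 1 := Multiset.nodup_iff_count_le_one.mp hA' a
    have h4 : B'.count a ≤ 1 := Multiset.nodup_iff_count_le_one.mp hB' a
    have hd : A.count a = 0 ∨ B.count a = 0 := by
      by_contra hh
      push_neg at hh
      exact hAB a ⟨Multiset.count_pos.mp (by omega), Multiset.count_pos.mp (by omega)⟩
    have hd' : A'.count a = 0 ∨ B'.count a = 0 := by
      by_contra hh
      push_neg at hh
      exact hAB' a ⟨Multiset.count_pos.mp (by omega), Multiset.count_pos.mp (by omega)⟩
    omega
  refine ⟨hAA, ?_⟩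
  rw [hAA] at h
  exact ((add_right_inj _).mp h).symm

lemma residue_classification {F : Type*} [Field F] [DecidableEq F] {r : ℕ}
    (hne : (-1 : F) ≠ 1)
    (s : Fin r → F) (hs : ∀ i, s i = 1 ∨ s i = -1)
    (hchar : ∀ j : ℕ, 1 ≤ j → j ≤ r → (j : F) ≠ 0)
    (u v : Fin r → F) (hu : Function.Injective u) (hv : Function.Injective v)
    (hpow : ∀ j : ℕ, 1 ≤ j → j ≤ r → ∑ i, s i * u i ^ j = ∑ i, s i * v i ^ j) :
    Multiset.map u Finset.univ.val = Multiset.map v Finset.univ.val := by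
  classical
  set x : Fin r → F := fun i => if s i = 1 then u i else v i with hx
  set y : Fin r → F := fun i => if s i = 1 then v i else u i with hy
  have hxy : ∀ j : ℕ, 1 ≤ j → j ≤ r → ∑ i, x i ^ j = ∑ i, y i ^ j := by
    intro j hj1 hj2
    have hsum : ∑ i, (x i ^ j - y i ^ j) = ∑ i, (s i * u i ^ j - s i * v i ^ j) := by
      refine Finset.sum_congr rfl fun i _ => ?_
      rcases hs i with h | h
      · simp [hx, hy, h]
      · rw [hx, hy]
        simp only [h, if_neg hne]
        ring
    rw [Finset.sum_sub_distrib, Finset.sum_sub_distrib] at hsum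
    rw [hpow j hj1 hj2, sub_self] at hsum
    exact sub_eq_zero.mp hsum
  have hmain := multiset_map_eq_of_psum_eq x y hchar hxy
  have hsplit : ∀ w₁ w₂ : Fin r → F,
      Multiset.map (fun i => if s i = 1 then w₁ i else w₂ i) Finset.univ.val =
      Multiset.map w₁ (Multiset.filter (fun i => s i = 1) Finset.univ.val) +
      Multiset.map w₂ (Multiset.filter (fun i => ¬ s i = 1) Finset.univ.val) := by
    intro w₁ w₂
    conv_lhs => rw [← Multiset.filter_add_not (fun i => s i = 1) Finset.univ.val]
    rw [Multiset.map_add]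
    congr 1
    · exact Multiset.map_congr rfl fun i hi => if_pos (Multiset.mem_filter.mp hi).2
    · exact Multiset.map_congr rfl fun i hi => if_neg (Multiset.mem_filter.mp hi).2
  rw [hsplit u v, hsplit v u] at hmain
  have hnodupf : (Multiset.filter (fun i => s i = 1) (Finset.univ.val : Multiset (Fin r))).Nodup :=
    Finset.univ.nodup.filter _
  have hnodupf' : (Multiset.filter (fun i => ¬ s i = 1)
      (Finset.univ.val : Multiset (Fin r))).Nodup :=
    Finset.univ.nodup.filter _
  have hdisj : ∀ (w : Fin r → F), Function.Injective w → ∀ a,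
      ¬(a ∈ Multiset.map w (Multiset.filter (fun i => s i = 1) Finset.univ.val) ∧
        a ∈ Multiset.map w (Multiset.filter (fun i => ¬ s i = 1) Finset.univ.val)) := by
    intro w hw a ⟨ha1, ha2⟩
    obtain ⟨i, hi, hia⟩ := Multiset.mem_map.mp ha1
    obtain ⟨i', hi', hia'⟩ := Multiset.mem_map.mp ha2
    have : i = i' := hw (by rw [hia, hia'])
    subst this
    exact (Multiset.mem_filter.mp hi').2 (Multiset.mem_filter.mp hi).2
  obtain ⟨hA, hB⟩ := multiset_pair_eq hmain
    (hnodupf.map hu) (hnodupf'.map hu) (hnodupf.map hv) (hnodupf'.map hv)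
    (hdisj u hu) (hdisj v hv)
  conv_lhs => rw [← Multiset.filter_add_not (fun i => s i = 1) Finset.univ.val]
  conv_rhs => rw [← Multiset.filter_add_not (fun i => s i = 1) Finset.univ.val]
  rw [Multiset.map_add, Multiset.map_add, hA, hB]

lemma ncard_le_factorial {F : Type*} [DecidableEq F] {r : ℕ} (Q : Finset F) (hQ : Q.card = r)
    (S : Set (Fin r → F)) (hS : ∀ f ∈ S, Function.Injective f ∧ ∀ i, f i ∈ Q) :
    S.ncard ≤ r.factorial := by
  classical
  have hsub : S ⊆ (fun (e : Fin r ↪ Q) (i : Fin r) => (e i : F)) '' Set.univ := by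
    intro f hf
    obtain ⟨hinj, hmem⟩ := hS f hf
    exact ⟨⟨fun i => ⟨f i, hmem i⟩, fun i j hij => hinj (congrArg Subtype.val hij)⟩, trivial, rfl⟩
  calc S.ncard ≤ _ := Set.ncard_le_ncard hsub (Set.toFinite _)
    _ ≤ (Set.univ : Set (Fin r ↪ Q)).ncard := Set.ncard_image_le (Set.toFinite _)
    _ = Fintype.card (Fin r ↪ Q) := by rw [Set.ncard_univ, Nat.card_eq_fintype_card]
    _ = r.factorial := by
        rw [Fintype.card_embedding_eq, Fintype.card_coe, hQ, Fintype.card_fin,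
          Nat.descFactorial_self]

lemma vanish_of_vandermonde {F : Type*} [Field F] {r ρ : ℕ} (hρ : 1 ≤ ρ)
    (s : Fin r → F) (hs : ∀ i, s i = 1 ∨ s i = -1)
    (ybar : Fin r → F) (hy0 : ∀ i, ybar i ≠ 0) (hyinj : Function.Injective ybar)
    (hc : ∀ l : Fin r, ((ρ + (l : ℕ) : ℕ) : F) ≠ 0)
    (e : Fin r → F)
    (heq : ∀ l : Fin r, ∑ i, s i * ((ρ + (l : ℕ) : ℕ) : F) * ybar i ^ (ρ + (l : ℕ) - 1) * e i = 0) :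
    ∀ i, e i = 0 := by
  classical
  set M : Matrix (Fin r) (Fin r) F :=
    Matrix.of fun l i => s i * ((ρ + (l : ℕ) : ℕ) : F) * ybar i ^ (ρ + (l : ℕ) - 1) with hM
  have hfact : M = Matrix.diagonal (fun l : Fin r => ((ρ + (l : ℕ) : ℕ) : F)) *
      (Matrix.vandermonde ybar)ᵀ * Matrix.diagonal (fun i => s i * ybar i ^ (ρ - 1)) := by
    ext l i
    rw [Matrix.mul_diagonal, Matrix.diagonal_mul]
    simp only [hM, Matrix.of_apply, Matrix.transpose_apply, Matrix.vandermonde_apply]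
    have hexp : ρ + (l : ℕ) - 1 = (l : ℕ) + (ρ - 1) := by omega
    rw [hexp, pow_add]
    ring
  have hdet : M.det ≠ 0 := by
    rw [hfact, Matrix.det_mul, Matrix.det_mul, Matrix.det_transpose, Matrix.det_diagonal,
      Matrix.det_diagonal, Matrix.det_vandermonde]
    refine mul_ne_zero (mul_ne_zero ?_ ?_) ?_
    · exact Finset.prod_ne_zero_iff.mpr fun l _ => hc l
    · refine Finset.prod_ne_zero_iff.mpr fun i _ => Finset.prod_ne_zero_iff.mpr fun j hj => ?_
      rw [Finset.mem_Ioi] at hj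
      exact sub_ne_zero.mpr fun hcon => (ne_of_gt hj) (hyinj hcon)
    · refine Finset.prod_ne_zero_iff.mpr fun i _ => mul_ne_zero ?_ (pow_ne_zero _ (hy0 i))
      rcases hs i with h | h
      · rw [h]; exact one_ne_zero
      · rw [h]; exact neg_ne_zero.mpr one_ne_zero
  have hmv : M.mulVec e = 0 := by
    funext l
    simpa [Matrix.mulVec, dotProduct, hM] using heq l
  have := Matrix.eq_zero_of_mulVec_eq_zero hdet hmv
  exact fun i => congrFun this i

lemma binom_expand (a d : ℤ) :
    ∀ j : ℕ, ∃ c : ℤ, (a + d) ^ j = a ^ j + j * a ^ (j - 1) * d + d ^ 2 * c := by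
  intro j
  induction j with
  | zero => exact ⟨0, by norm_num⟩
  | succ j ih =>
    obtain ⟨c, hc⟩ := ih
    rcases Nat.eq_zero_or_pos j with h0 | h1
    · subst h0
      exact ⟨0, by norm_num⟩
    · refine ⟨a * c + (j : ℤ) * a ^ (j - 1) * 1 + d * c, ?_⟩
      have hj : j - 1 + 1 = j := Nat.succ_pred_eq_of_pos h1
      have hpow : a ^ (j - 1) * a = a ^ j := by
        rw [← pow_succ, hj]
      calc (a + d) ^ (j + 1) = (a + d) ^ j * (a + d) := by rw [pow_succ]
        _ = (a ^ j + j * a ^ (j - 1) * d + d ^ 2 * c) * (a + d) := by rw [hc]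
        _ = a ^ j * a + (j * (a ^ (j - 1) * a) * d + a ^ j * d) +
            d ^ 2 * (a * c + (j : ℤ) * a ^ (j - 1) * 1 + d * c) := by ring
        _ = a ^ (j + 1) + (↑(j + 1)) * a ^ (j + 1 - 1) * d +
            d ^ 2 * (a * c + (j : ℤ) * a ^ (j - 1) * 1 + d * c) := by
            rw [hpow, ← pow_succ]
            push_cast
            ring

lemma numClasses_le_of_lift {p q r : ℕ} (hdvd : p ∣ q) (S : Set (Fin r → ℤ))
    (h : ∀ z ∈ S, ∀ w ∈ S, (∀ i, ((z i : ZMod p)) = ((w i : ZMod p))) →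
      ∀ i, ((z i : ZMod q)) = ((w i : ZMod q))) :
    numClasses q r S ≤ numClasses p r S := by
  classical
  set fq : (Fin r → ℤ) → (Fin r → ZMod q) := fun z i => ((z i : ZMod q)) with hfq
  set fp : (Fin r → ℤ) → (Fin r → ZMod p) := fun z i => ((z i : ZMod p)) with hfp
  set g : (Fin r → ZMod q) → (Fin r → ZMod p) := fun v i => ZMod.castHom hdvd (ZMod p) (v i)
    with hg
  have hcomp : ∀ z : Fin r → ℤ, g (fq z) = fp z := by
    intro z
    funext i
    exact map_intCast (ZMod.castHom hdvd (ZMod p)) (z i)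
  have hinj : Set.InjOn g (fq '' S) := by
    rintro v ⟨z, hz, rfl⟩ w ⟨w', hw', rfl⟩ hgv
    rw [hcomp, hcomp] at hgv
    funext i
    exact h z hz w' hw' (fun i => congrFun hgv i) i
  have himg : g '' (fq '' S) = fp '' S := by
    rw [← Set.image_comp]
    exact Set.image_congr fun z _ => hcomp z
  have := Set.ncard_image_of_injOn hinj
  rw [himg] at this
  exact this.symm.le

end Aux

theorem statement12 (k r : ℕ) (hk : 3 ≤ k) (hr1 : 1 ≤ r) (hr2 : r ≤ k - 1) :
    ∃ p₀ : ℕ, ∀ p : ℕ, p.Prime → p₀ ≤ p →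
      ∀ b : ℕ, 1 ≤ b →
      ∀ η : ℤ, 1 ≤ η → η ≤ (p : ℤ) ^ b →
      ∀ σ : Fin r → ℤ, (∀ i, σ i = 1 ∨ σ i = -1) →
      ∀ m : ℕ → ℤ, (∀ j ∈ Finset.Icc 1 k, 1 ≤ m j ∧ m j ≤ (p : ℤ) ^ (k * b)) →
      numClasses (p ^ ((k - r + 1) * b)) r (Bset0 p k r b σ m η) ≤ k.factorial := by
  refine ⟨k + 1, ?_⟩
  intro p hp hpk b hb η hη1 hη2 σ hσ m hm
  haveI : Fact p.Prime := ⟨hp⟩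
  set ρ := k - r + 1 with hρdef
  set n := ρ * b with hndef
  set S := Bset0 p k r b σ m η with hSdef
  have hkp : k < p := by omega
  have hρ1 : 1 ≤ ρ := by omega
  have hρrk : ρ + r - 1 = k := by omega
  have hn1 : 1 ≤ n := by
    rw [hndef]
    exact Nat.one_le_iff_ne_zero.mpr (Nat.mul_ne_zero (by omega) (by omega))
  have hpz : (p : ℤ) ≠ 0 := by exact_mod_cast hp.ne_zero
  have hnatp : ∀ a : ℕ, 1 ≤ a → a ≤ k → ((a : ZMod p)) ≠ 0 := by
    intro a h1 h2 hcon
    have hd := (ZMod.natCast_eq_zero_iff a p).mp hcon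
    have := Nat.le_of_dvd (by omega) hd
    omega
  have hσcast : ∀ i : Fin r, ((σ i : ℤ) : ZMod p) = 1 ∨ ((σ i : ℤ) : ZMod p) = -1 := by
    intro i
    rcases hσ i with h | h
    · left; rw [h]; exact Int.cast_one
    · right; rw [h]; push_cast; ring
  have hne1 : (-1 : ZMod p) ≠ 1 := by
    intro hcon
    have h2 : ((2 : ℕ) : ZMod p) = 0 := by
      push_cast
      linear_combination -hcon
    exact hnatp 2 (by omega) (by omega) h2
  -- distinctness mod p of coordinates of elements of S
  have hSdistinct : ∀ z ∈ S, ∀ i j : Fin r, i ≠ j → ¬ ((p : ℤ) ∣ (z i - z j)) := by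
    rintro z ⟨-, -, -, ξ', ⟨-, hξd⟩, hzξ⟩ i j hij hdvd
    refine hξd i j hij ?_
    have hrw : ξ' i - ξ' j = -(z i - ξ' i) + (z i - z j) + (z j - ξ' j) := by ring
    have : (p : ℤ) ∣ ξ' i - ξ' j := by
      rw [hrw]
      exact dvd_add (dvd_add (dvd_neg.mpr (hzξ i)) hdvd) (hzξ j)
    simpa using this
  have hSinj : ∀ z ∈ S, Function.Injective (fun i : Fin r => ((z i : ZMod p))) := by
    intro z hz i j hij
    by_contra hne
    apply hSdistinct z hz i j hne
    have h0 : ((z i - z j : ℤ) : ZMod p) = 0 := by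
      push_cast
      rw [sub_eq_zero]
      exact hij
    exact (ZMod.intCast_zmod_eq_zero_iff_dvd _ p).mp h0
  -- power sums mod p agree
  have hSpow : ∀ z ∈ S, ∀ w ∈ S, ∀ j : ℕ, 1 ≤ j → j ≤ k →
      (((∑ i, σ i * (z i - η) ^ j : ℤ)) : ZMod p)
        = (((∑ i, σ i * (w i - η) ^ j : ℤ)) : ZMod p) := by
    intro z hz w hw j h1 h2
    obtain ⟨-, hzc, -, -⟩ := hz
    obtain ⟨-, hwc, -, -⟩ := hw
    have dz := hzc j (Finset.mem_Icc.mpr ⟨h1, h2⟩)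
    have dw := hwc j (Finset.mem_Icc.mpr ⟨h1, h2⟩)
    have hd : (p : ℤ) ^ (j * b) ∣ (∑ i, σ i * (z i - η) ^ j) - (∑ i, σ i * (w i - η) ^ j) := by
      have := dvd_sub dz dw
      rwa [sub_sub_sub_cancel_right] at this
    have hpd : (p : ℤ) ∣ (∑ i, σ i * (z i - η) ^ j) - (∑ i, σ i * (w i - η) ^ j) := by
      refine dvd_trans ?_ hd
      calc (p : ℤ) = (p : ℤ) ^ 1 := (pow_one _).symm
        _ ∣ (p : ℤ) ^ (j * b) := pow_dvd_pow _ (by nlinarith)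
    rw [← sub_eq_zero, ← Int.cast_sub]
    exact (ZMod.intCast_zmod_eq_zero_iff_dvd _ p).mpr hpd
  -- Hensel-type lifting: agreement mod p implies agreement mod p^n
  have hlift : ∀ z ∈ S, ∀ w ∈ S, (∀ i, ((z i : ZMod p)) = ((w i : ZMod p))) →
      ∀ i, ((z i : ZMod (p ^ n))) = ((w i : ZMod (p ^ n))) := by
    intro z hz w hw h1
    have hzmem := hz
    have hwmem := hw
    have h1' : ∀ i, (p : ℤ) ∣ (z i - w i) := by
      intro i
      have h0 : ((z i - w i : ℤ) : ZMod p) = 0 := by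
        push_cast
        rw [sub_eq_zero]
        exact h1 i
      exact (ZMod.intCast_zmod_eq_zero_iff_dvd _ p).mp h0
    obtain ⟨-, hzc, -, -⟩ := hzmem
    obtain ⟨-, hwc, hwu, -⟩ := hwmem
    set ybar : Fin r → ZMod p := fun i => ((w i : ZMod p)) - ((η : ZMod p)) with hybar
    have hy0 : ∀ i, ybar i ≠ 0 := by
      intro i hcon
      apply hwu i
      refine (ZMod.intCast_zmod_eq_zero_iff_dvd _ p).mp ?_
      push_cast
      exact hcon
    have hyinj : Function.Injective ybar := by
      intro i j hij
      apply hSinj w hw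
      have : ((w i : ZMod p)) = ((w j : ZMod p)) := by
        have := hij
        simp only [hybar] at this
        linear_combination this
      exact this
    have key : ∀ t : ℕ, 1 ≤ t → t ≤ n → ∀ i, (p : ℤ) ^ t ∣ z i - w i := by
      intro t
      induction t with
      | zero => omega
      | succ t ih =>
        intro _ htn
        rcases Nat.eq_zero_or_pos t with rfl | ht1
        · intro i
          simpa using h1' i
        · have hdt := ih ht1 (by omega)
          set e : Fin r → ℤ := fun i => (z i - w i) / (p : ℤ) ^ t with he
          have hze : ∀ i, z i - w i = (p : ℤ) ^ t * e i := by
            intro i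
            rw [he]
            exact (Int.mul_ediv_cancel' (hdt i)).symm
          have hDdvd : ∀ l : Fin r,
              (p : ℤ) ∣ ∑ i, σ i * ((ρ + (l : ℕ) : ℕ) : ℤ)
                * (w i - η) ^ (ρ + (l : ℕ) - 1) * e i := by
            intro l
            set j : ℕ := ρ + (l : ℕ) with hjdef
            have hj1 : 1 ≤ j := by omega
            have hjk : j ≤ k := by
              have := l.isLt
              omega
            choose c hc using fun i => binom_expand (w i - η) (z i - w i) j
            have hsum : (∑ i, σ i * (z i - η) ^ j) - (∑ i, σ i * (w i - η) ^ j)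
                = (p : ℤ) ^ t * (∑ i, σ i * (j : ℤ) * (w i - η) ^ (j - 1) * e i)
                  + (p : ℤ) ^ t * (p : ℤ) ^ t * (∑ i, σ i * (e i) ^ 2 * c i) := by
              rw [Finset.mul_sum, Finset.mul_sum, ← Finset.sum_sub_distrib,
                ← Finset.sum_add_distrib]
              refine Finset.sum_congr rfl fun i _ => ?_
              have hzi : z i - η = (w i - η) + (z i - w i) := by ring
              rw [hzi, hc i, hze i]
              ring
            have hLHS : (p : ℤ) ^ (t + 1) ∣
                (∑ i, σ i * (z i - η) ^ j) - (∑ i, σ i * (w i - η) ^ j) := by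
              have dz := hzc j (Finset.mem_Icc.mpr ⟨hj1, hjk⟩)
              have dw := hwc j (Finset.mem_Icc.mpr ⟨hj1, hjk⟩)
              have hd : (p : ℤ) ^ (j * b) ∣
                  (∑ i, σ i * (z i - η) ^ j) - (∑ i, σ i * (w i - η) ^ j) := by
                have := dvd_sub dz dw
                rwa [sub_sub_sub_cancel_right] at this
              refine dvd_trans (pow_dvd_pow (p : ℤ) ?_) hd
              have hnb : n ≤ j * b := by
                rw [hndef]
                exact Nat.mul_le_mul_right b (by omega)
              exact le_trans htn hnb
            have hsq : (p : ℤ) ^ (t + 1) ∣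
                (p : ℤ) ^ t * (p : ℤ) ^ t * (∑ i, σ i * (e i) ^ 2 * c i) := by
              refine Dvd.dvd.mul_right ?_ _
              rw [← pow_add]
              exact pow_dvd_pow _ (by omega)
            rw [hsum] at hLHS
            have hDp : (p : ℤ) ^ (t + 1) ∣
                (p : ℤ) ^ t * (∑ i, σ i * (j : ℤ) * (w i - η) ^ (j - 1) * e i) := by
              have := dvd_sub hLHS hsq
              simpa using this
            have hcancel : (p : ℤ) ^ t * (p : ℤ) ∣
                (p : ℤ) ^ t * (∑ i, σ i * (j : ℤ) * (w i - η) ^ (j - 1) * e i) := by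
              rw [← pow_succ]
              exact hDp
            exact (mul_dvd_mul_iff_left (pow_ne_zero t hpz)).mp hcancel
          have hzero : ∀ i, ((e i : ZMod p)) = 0 := by
            refine vanish_of_vandermonde hρ1 (fun i => ((σ i : ZMod p)))
              (fun i => hσcast i) ybar hy0 hyinj (fun l => hnatp (ρ + (l : ℕ)) (by omega)
                (by have := l.isLt; omega)) (fun i => ((e i : ZMod p))) ?_
            · intro l
              have h0 : ((∑ i, σ i * ((ρ + (l : ℕ) : ℕ) : ℤ)
                  * (w i - η) ^ (ρ + (l : ℕ) - 1) * e i : ℤ) : ZMod p) = 0 :=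
                (ZMod.intCast_zmod_eq_zero_iff_dvd _ p).mpr (hDdvd l)
              push_cast at h0 ⊢
              simp only [hybar]
              convert h0 using 2
          intro i
          have pe : (p : ℤ) ∣ e i := (ZMod.intCast_zmod_eq_zero_iff_dvd _ p).mp (hzero i)
          rw [hze i, pow_succ]
          exact mul_dvd_mul_left _ pe
    intro i
    have hfin := key n hn1 le_rfl i
    have hcast : (((p : ℕ) ^ n : ℕ) : ℤ) ∣ (z i - w i) := by
      push_cast
      exact hfin
    have h0 : ((z i - w i : ℤ) : ZMod (p ^ n)) = 0 :=
      (ZMod.intCast_zmod_eq_zero_iff_dvd (z i - w i) (p ^ n)).mpr hcast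
    have h2 : ((z i : ZMod (p ^ n))) - ((w i : ZMod (p ^ n))) = 0 := by
      push_cast at h0
      exact h0
    exact sub_eq_zero.mp h2
  -- bound the number of classes mod p
  have hbound : numClasses p r S ≤ Nat.factorial k := by
    rcases Set.eq_empty_or_nonempty S with hSe | ⟨z₀, hz₀⟩
    · rw [numClasses, hSe, Set.image_empty, Set.ncard_empty]
      exact Nat.zero_le _
    · classical
      set Q : Finset (ZMod p) := Finset.image (fun i => ((z₀ i : ZMod p))) Finset.univ with hQ
      have hQcard : Q.card = r := by
        rw [hQ, Finset.card_image_of_injective _ (hSinj z₀ hz₀), Finset.card_univ,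
          Fintype.card_fin]
      refine le_trans (ncard_le_factorial Q hQcard _ ?_) (Nat.factorial_le (by omega))
      rintro f ⟨z, hz, rfl⟩
      refine ⟨hSinj z hz, ?_⟩
      have huinj : ∀ y ∈ S, Function.Injective
          (fun i : Fin r => ((y i : ZMod p)) - ((η : ZMod p))) := by
        intro y hy i j hij
        apply hSinj y hy
        have : ((y i : ZMod p)) = ((y j : ZMod p)) := by linear_combination hij
        exact this
      have hmm := residue_classification hne1 (fun i => ((σ i : ZMod p)))
        (fun i => hσcast i)
        (fun j h1 h2 => hnatp j h1 (by omega))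
        (fun i => ((z i : ZMod p)) - ((η : ZMod p)))
        (fun i => ((z₀ i : ZMod p)) - ((η : ZMod p)))
        (huinj z hz) (huinj z₀ hz₀)
        (by
          intro j h1 h2
          have := hSpow z hz z₀ hz₀ j h1 (by omega)
          push_cast at this
          convert this using 2)
      intro i
      have hmem : ((z i : ZMod p)) - ((η : ZMod p)) ∈
          Multiset.map (fun i => ((z i : ZMod p)) - ((η : ZMod p))) Finset.univ.val :=
        Multiset.mem_map_of_mem _ (Finset.mem_univ i)
      rw [hmm] at hmem
      obtain ⟨i', -, hi'⟩ := Multiset.mem_map.mp hmem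
      have hfi : ((z i : ZMod p)) = ((z₀ i' : ZMod p)) := by linear_combination -hi'
      show ((z i : ZMod p)) ∈ Q
      rw [hfi, hQ]
      exact Finset.mem_image_of_mem _ (Finset.mem_univ i')
  calc numClasses (p ^ n) r S ≤ numClasses p r S :=
        numClasses_le_of_lift (dvd_pow_self p (by omega)) S hlift
    _ ≤ k.factorial := hbound
end
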